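/- Let ψ be a unit vector in (ℂ²)^{⊗n}. If there exist 2^{n+1} strings V'_j = U₁^{(j)} ⊗ ⋯ ⊗ U_{n+1}^{(j)} of 2×2 complex unitary matrices such that the vectors V'_j(ψ ⊗ e₀) (j = 1, …, 2^{n+1}) are pairwise orthogonal unit vectors in (ℂ²)^{⊗(n+1)}, then there exist 2^n strings V_j = U₁^{(j)} ⊗ ⋯ ⊗ U_n^{(j)} of 2×2 complex unitary matrices such that the vectors V_j ψ (j = 1, …, 2^n) are pairwise orthogonal. Equivalently: if an n-qubit state ψ admits no basis under local unitaries, then the (n+1)-qubit state ψ ⊗ e₀ admits no basis. -/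

import Mathlib

open Matrix

open ComplexConjugate Finset in
/-- Combinatorial core: given "line" and "perp-line" labels on `Fin N` satisfying the
axioms below, at least half the indices can be chosen pairwise non-orthogonal. -/
lemma comboAux {N : ℕ} {X : Type} [DecidableEq X] (L P : Fin N → X)
    (h1 : ∀ j, L j ≠ P j)
    (h2 : ∀ j j', L j = P j' ↔ L j' = P j)
    (h3 : ∀ j j', L j = L j' → P j = P j')
    (h4 : ∀ j j', P j = P j' → L j = L j') :
    ∃ S : Finset (Fin N), N ≤ 2 * S.card ∧ ∀ j ∈ S, ∀ j' ∈ S, L j' ≠ P j := by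
  classical
  set A : Fin N → Finset (Fin N) := fun j => univ.filter (fun k => L k = L j) with hA
  set B : Fin N → Finset (Fin N) := fun j => univ.filter (fun k => L k = P j) with hB
  have hmemA : ∀ j, j ∈ A j := fun j => by simp [hA]
  have hABdisj : ∀ j, ∀ k, k ∈ A j → k ∉ B j := by
    intro j k hk hk'
    simp only [hA, hB, mem_filter] at hk hk'
    exact h1 j (hk.2 ▸ hk'.2 ▸ rfl)
  have hminne : ∀ (C D : Finset (Fin N)), C.Nonempty → (∀ k ∈ C, k ∉ D) →
      C.min ≠ D.min := by
    intro C D hC hdisj he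
    obtain ⟨a, ha⟩ := Finset.min_of_nonempty hC
    exact hdisj a (Finset.mem_of_min ha) (Finset.mem_of_min (he ▸ ha))
  have hedge : ∀ j j', L j' = P j → A j' = B j ∧ B j' = A j := by
    intro j j' he
    have he' : L j = P j' := (h2 j j').mpr he
    constructor
    · ext k; simp [hA, hB, he]
    · ext k; simp [hA, hB, he']
  set S : Finset (Fin N) :=
    univ.filter (fun j => (B j).card < (A j).card ∨
      ((B j).card = (A j).card ∧ (A j).min < (B j).min)) with hS
  have hnotS : ∀ j ∉ S, (A j).card ≤ (B j).card ∧
      ((B j).card = (A j).card → (B j).min ≤ (A j).min) := by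
    intro j hj
    simp only [hS, mem_filter, mem_univ, true_and] at hj
    push_neg at hj
    exact hj
  have hBsubS : ∀ j ∉ S, B j ⊆ S := by
    intro j hj k hk
    have hLk : L k = P j := by simpa [hB] using hk
    obtain ⟨hAk, hBk⟩ := hedge j k hLk
    obtain ⟨hcard, hmin⟩ := hnotS j hj
    simp only [hS, mem_filter, mem_univ, true_and, hAk, hBk]
    rcases lt_or_eq_of_le hcard with hlt | heq
    · exact Or.inl hlt
    · refine Or.inr ⟨heq, ?_⟩
      have hle : (B j).min ≤ (A j).min := hmin heq.symm
      exact lt_of_le_of_ne hle (hminne _ _ ⟨k, hk⟩ (fun m hm hm' => hABdisj j m hm' hm))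
  refine ⟨S, ?_, ?_⟩
  · -- cardinality
    set f : Fin N → Fin N := fun j =>
      ((B j).sort (· ≤ ·)).getD (((A j).sort (· ≤ ·)).idxOf j) j with hf
    have hidx : ∀ j ∉ S, ((A j).sort (· ≤ ·)).idxOf j < ((B j).sort (· ≤ ·)).length := by
      intro j hj
      calc ((A j).sort (· ≤ ·)).idxOf j < ((A j).sort (· ≤ ·)).length :=
            List.idxOf_lt_length_iff.mpr ((Finset.mem_sort _).mpr (hmemA j))
        _ ≤ _ := by
            rw [Finset.length_sort, Finset.length_sort]; exact (hnotS j hj).1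
    have hfmem : ∀ j ∉ S, f j ∈ B j := by
      intro j hj
      rw [hf]
      simp only
      rw [List.getD_eq_getElem _ _ (hidx j hj), ← Finset.mem_sort (α := Fin N) (· ≤ ·)]
      exact List.getElem_mem _
    have hcard : Sᶜ.card ≤ S.card := by
      apply Finset.card_le_card_of_injOn f
      · intro j hj
        rw [Finset.mem_coe, Finset.mem_compl] at hj
        exact hBsubS j hj (hfmem j hj)
      · intro j hj j' hj' hff
        rw [Finset.mem_coe, Finset.mem_compl] at hj hj'
        by_cases hLL : L j = L j'
        · have hPP := h3 _ _ hLL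
          have hAeq : A j = A j' := by ext k; simp [hA, hLL]
          have hBeq : B j = B j' := by ext k; simp [hB, hPP]
          have h1' := hidx j hj
          rw [hf] at hff
          simp only at hff
          rw [hAeq, hBeq] at h1'
          rw [hAeq, hBeq] at hff
          rw [List.getD_eq_getElem _ _ h1', List.getD_eq_getElem _ _ (hidx j' hj')] at hff
          have hieq : ((A j').sort (· ≤ ·)).idxOf j = ((A j').sort (· ≤ ·)).idxOf j' :=
            (List.Nodup.getElem_inj_iff (Finset.sort_nodup _ _)).mp hff
          have hj1 : j ∈ (A j').sort (· ≤ ·) := by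
            rw [Finset.mem_sort]; rw [← hAeq]; exact hmemA j
          have hj2 : j' ∈ (A j').sort (· ≤ ·) := by rw [Finset.mem_sort]; exact hmemA j'
          have := congrArg (fun i => ((A j').sort (· ≤ ·)).getD i j) hieq
          simp only at this
          rwa [List.getD_eq_getElem _ _ (List.idxOf_lt_length_iff.mpr hj1),
            List.getD_eq_getElem _ _ (List.idxOf_lt_length_iff.mpr hj2),
            List.getElem_idxOf, List.getElem_idxOf] at this
        · exfalso
          have hBj := hfmem j hj
          have hBj' := hfmem j' hj'
          rw [hff] at hBj
          simp only [hB, mem_filter] at hBj hBj'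
          exact hLL (h4 _ _ (hBj.2 ▸ hBj'.2 ▸ rfl))
    have := Finset.card_add_card_compl S
    simp only [Fintype.card_fin] at this
    omega
  · -- independence
    intro j hj j' hj' he
    obtain ⟨hAe, hBe⟩ := hedge j j' he
    simp only [hS, mem_filter, mem_univ, true_and] at hj hj'
    rw [hAe, hBe] at hj'
    rcases hj with h | ⟨hc, hm⟩ <;> rcases hj' with h' | ⟨hc', hm'⟩
    · omega
    · omega
    · omega
    · exact absurd hm' (not_lt.mpr hm.le)

open ComplexConjugate

/-- The "line invariant" of a unit vector `(a, b)` in `ℂ²`. -/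
noncomputable def Lf (a b : ℂ) : ℂ × ℂ := (a * conj b, a * conj a)

/-- The line invariant of the orthogonal complement of `(a, b)`. -/
noncomputable def Pf (a b : ℂ) : ℂ × ℂ := (-(a * conj b), b * conj b)

lemma Pf_eq_Lf (a b : ℂ) : Pf a b = Lf (-(conj b)) (conj a) := by
  simp only [Pf, Lf, _root_.map_neg, Complex.conj_conj, Prod.mk.injEq]
  constructor <;> ring

lemma unit_perp {a b : ℂ} (ha : conj a * a + conj b * b = 1) :
    conj (-(conj b)) * (-(conj b)) + conj (conj a) * (conj a) = 1 := by
  simp only [_root_.map_neg, Complex.conj_conj]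
  linear_combination ha

/-- Unit vectors in `ℂ²` with the same line invariant are proportional. -/
lemma prop_of_L_eq {a b c d : ℂ} (ha : conj a * a + conj b * b = 1)
    (hc : conj c * c + conj d * d = 1) (hL : Lf a b = Lf c d) :
    ∃ t : ℂ, conj t * t = 1 ∧ c = t * a ∧ d = t * b := by
  obtain ⟨hL1, hL2⟩ := Prod.mk.injEq .. ▸ hL
  by_cases h : a = 0
  · subst h
    have hc0 : c = 0 := by
      have : c * conj c = 0 := by linear_combination -hL2
      have := Complex.mul_conj c ▸ this
      exact_mod_cast Complex.normSq_eq_zero.mp (by exact_mod_cast this)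
    subst hc0
    have hb : conj b * b = 1 := by linear_combination ha
    have hd : conj d * d = 1 := by linear_combination hc
    refine ⟨d * conj b, ?_, by ring, ?_⟩
    · have : conj (d * conj b) * (d * conj b) = (conj d * d) * (conj b * b) := by
        simp only [_root_.map_mul, Complex.conj_conj]; ring
      rw [this, hb, hd, mul_one]
    · linear_combination -d * hb
  · have hcc : c ≠ 0 := by
      intro hc0
      apply h
      have : a * conj a = 0 := by rw [hL2, hc0]; ring
      have := Complex.mul_conj a ▸ this
      exact Complex.normSq_eq_zero.mp (by exact_mod_cast this)
    refine ⟨c / a, ?_, by field_simp, ?_⟩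
    · have h' : conj a ≠ 0 := by simpa using h
      rw [map_div₀]
      field_simp
      linear_combination -hL2
    · have hconj : conj a * b = conj c * d := by
        simpa only [_root_.map_mul, Complex.conj_conj] using congrArg conj hL1
      have key : conj c * (c * b - a * d) = 0 := by
        linear_combination a * hconj - b * hL2
      have : c * b - a * d = 0 := by
        rcases mul_eq_zero.mp key with h' | h'
        · exact absurd (by simpa using congrArg conj h') hcc
        · exact h'
      field_simp
      linear_combination -this

/-- Orthogonality of unit vectors in `ℂ²`, characterized by the line invariants. -/
lemma core_iff {a b c d : ℂ} (ha : conj a * a + conj b * b = 1)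
    (hc : conj c * c + conj d * d = 1) :
    (conj a * c + conj b * d = 0) ↔ Lf c d = Pf a b := by
  constructor
  · intro h0
    set lam : ℂ := -(b * c) + a * d with hlamdef
    have hg : c = lam * (-(conj b)) := by linear_combination (-c) * ha + a * h0
    have hd : d = lam * conj a := by linear_combination (-d) * ha + b * h0
    have hgc : conj c = conj lam * (-b) := by
      simpa only [_root_.map_mul, _root_.map_neg, Complex.conj_conj] using congrArg conj hg
    have hdc : conj d = conj lam * a := by
      simpa only [_root_.map_mul, Complex.conj_conj] using congrArg conj hd
    have hsub : conj lam * (-b) * (lam * (-(conj b))) + conj lam * a * (lam * conj a) = 1 := by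
      rw [← hg, ← hd, ← hgc, ← hdc]; exact hc
    have hlam : conj lam * lam = 1 := by
      linear_combination hsub - (conj lam * lam) * ha
    rw [Pf_eq_Lf]
    simp only [Lf, Prod.mk.injEq, _root_.map_neg, Complex.conj_conj]
    constructor
    · rw [hg, hdc]; linear_combination (-(conj b * a)) * hlam
    · rw [hg]
      simp only [_root_.map_mul, _root_.map_neg, Complex.conj_conj]
      linear_combination (conj b * b) * hlam
  · intro hL
    obtain ⟨t, ht, htc, htd⟩ :=
      prop_of_L_eq (unit_perp ha) hc (hL.trans (Pf_eq_Lf a b)).symm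
    rw [htc, htd]; ring

lemma P_respects_L {a b c d : ℂ} (ha : conj a * a + conj b * b = 1)
    (hc : conj c * c + conj d * d = 1) (hL : Lf a b = Lf c d) : Pf a b = Pf c d := by
  obtain ⟨t, ht, htc, htd⟩ := prop_of_L_eq ha hc hL
  simp only [Pf, Prod.mk.injEq, htc, htd, _root_.map_mul]
  constructor
  · linear_combination (a * conj b) * ht
  · linear_combination (-(b * conj b)) * ht

lemma L_respects_P {a b c d : ℂ} (ha : conj a * a + conj b * b = 1)
    (hc : conj c * c + conj d * d = 1) (hP : Pf a b = Pf c d) : Lf a b = Lf c d := by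
  have hP' : Lf (-(conj b)) (conj a) = Lf (-(conj d)) (conj c) :=
    (Pf_eq_Lf a b).symm.trans (hP.trans (Pf_eq_Lf c d))
  obtain ⟨t, ht, htc, htd⟩ := prop_of_L_eq (unit_perp ha) (unit_perp hc) hP'
  have hcd : c = conj t * a := by
    simpa only [_root_.map_mul, Complex.conj_conj] using congrArg conj htd
  have hdd : d = conj t * b := by
    have := congrArg conj htc
    simp only [_root_.map_neg, _root_.map_mul, Complex.conj_conj] at this
    linear_combination -this
  simp only [Lf, Prod.mk.injEq, hcd, hdd, _root_.map_mul, Complex.conj_conj]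
  constructor
  · linear_combination (-(a * conj b)) * ht
  · linear_combination (-(a * conj a)) * ht

/-- The `n`-fold Kronecker product `U 0 ⊗ ⋯ ⊗ U (n-1)` of `d×d` matrices, acting on
`(ℂ^d)^{⊗n} ≅ ℂ^{d^n}` indexed by `Fin n → Fin d`. -/
def kronPow {n d : ℕ} (U : Fin n → Matrix (Fin d) (Fin d) ℂ) :
    Matrix (Fin n → Fin d) (Fin n → Fin d) ℂ :=
  Matrix.of fun x y => ∏ k, U k (x k) (y k)

/-- The `(n+1)`-qubit state `ψ ⊗ e₀`. -/
def extendZero {n : ℕ} (ψ : (Fin n → Fin 2) → ℂ) : (Fin (n + 1) → Fin 2) → ℂ :=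
  fun x => if x (Fin.last n) = 0 then ψ (fun k => x k.castSucc) else 0

lemma kron_extend {n : ℕ} (U : Fin (n+1) → Matrix (Fin 2) (Fin 2) ℂ)
    (ψ : (Fin n → Fin 2) → ℂ) (x : Fin (n+1) → Fin 2) :
    (kronPow U *ᵥ extendZero ψ) x =
      (kronPow (fun k => U k.castSucc) *ᵥ ψ) (fun k => x k.castSucc) *
        U (Fin.last n) (x (Fin.last n)) 0 := by
  simp only [mulVec, dotProduct, kronPow, extendZero, Matrix.of_apply]
  rw [← (Fin.snocEquiv (fun _ => Fin 2)).sum_comp]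
  rw [Fintype.sum_prod_type]
  simp only [Fin.snocEquiv_apply, Fin.snoc_castSucc, Fin.snoc_last,
    Fin.prod_univ_castSucc]
  rw [Fin.sum_univ_two]
  simp only [if_pos rfl, if_neg (by decide : (1 : Fin 2) ≠ 0)]
  simp only [mul_zero, Finset.sum_const_zero, add_zero]
  rw [Finset.sum_mul]
  congr 1
  ext p
  rw [if_pos trivial]
  ring

lemma dot_split {n : ℕ} (f f' : (Fin n → Fin 2) → ℂ) (g g' : Fin 2 → ℂ) :
    star (fun x : Fin (n+1) → Fin 2 => f (fun k => x k.castSucc) * g (x (Fin.last n))) ⬝ᵥ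
      (fun x => f' (fun k => x k.castSucc) * g' (x (Fin.last n))) =
      (star f ⬝ᵥ f') * (star g ⬝ᵥ g') := by
  simp only [dotProduct, Pi.star_apply, star_mul']
  rw [← (Fin.snocEquiv (fun _ => Fin 2)).sum_comp]
  rw [Fintype.sum_prod_type]
  simp only [Fin.snocEquiv_apply, Fin.snoc_castSucc, Fin.snoc_last]
  rw [Finset.sum_mul_sum]
  rw [Finset.sum_comm]
  apply Finset.sum_congr rfl
  intro p _
  apply Finset.sum_congr rfl
  intro b _
  ring

lemma dot_two (u v : Fin 2 → ℂ) :
    star u ⬝ᵥ v = conj (u 0) * v 0 + conj (u 1) * v 1 := by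
  simp [dotProduct, Fin.sum_univ_two, Complex.star_def]

lemma dot_two_swap_zero (u v : Fin 2 → ℂ) :
    conj (u 0) * v 0 + conj (u 1) * v 1 = 0 ↔ conj (v 0) * u 0 + conj (v 1) * u 1 = 0 := by
  have key : conj (v 0) * u 0 + conj (v 1) * u 1 =
      conj (conj (u 0) * v 0 + conj (u 1) * v 1) := by
    simp only [_root_.map_add, _root_.map_mul, Complex.conj_conj]
    ring
  constructor
  · intro h; rw [key, h, _root_.map_zero]
  · intro h; rw [key] at h
    exact (_root_.map_eq_zero (starRingEnd ℂ)).mp h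

/-- If the `(n+1)`-qubit state `ψ ⊗ e₀` admits `2^{n+1}` local-unitary images that are
pairwise orthogonal unit vectors, then the `n`-qubit state `ψ` admits `2^n` local-unitary
images that are pairwise orthogonal. -/
theorem stmt2 (n : ℕ) (ψ : (Fin n → Fin 2) → ℂ) (hψ : star ψ ⬝ᵥ ψ = 1)
    (h : ∃ U : Fin (2 ^ (n + 1)) → Fin (n + 1) → Matrix (Fin 2) (Fin 2) ℂ,
      (∀ j k, U j k ∈ Matrix.unitaryGroup (Fin 2) ℂ) ∧
      ∀ j j', star (kronPow (U j) *ᵥ extendZero ψ) ⬝ᵥ (kronPow (U j') *ᵥ extendZero ψ) =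
        if j = j' then 1 else 0) :
    ∃ V : Fin (2 ^ n) → Fin n → Matrix (Fin 2) (Fin 2) ℂ,
      (∀ j k, V j k ∈ Matrix.unitaryGroup (Fin 2) ℂ) ∧
      ∀ j j', j ≠ j' → star (kronPow (V j) *ᵥ ψ) ⬝ᵥ (kronPow (V j') *ᵥ ψ) = 0 := by
  classical
  obtain ⟨U, hU, horth⟩ := h
  let a : Fin (2 ^ (n + 1)) → (Fin n → Fin 2) → ℂ :=
    fun j => kronPow (fun k => U j k.castSucc) *ᵥ ψ
  let w : Fin (2 ^ (n + 1)) → Fin 2 → ℂ := fun j b => U j (Fin.last n) b 0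
  have hvec : ∀ j, (kronPow (U j) *ᵥ extendZero ψ) =
      fun x => a j (fun k => x k.castSucc) * w j (x (Fin.last n)) :=
    fun j => funext (kron_extend (U j) ψ)
  have hfact : ∀ j j',
      (star (a j) ⬝ᵥ a j') * (star (w j) ⬝ᵥ w j') = if j = j' then 1 else 0 := by
    intro j j'
    rw [← horth j j', hvec j, hvec j']
    exact (dot_split (a j) (a j') (w j) (w j')).symm
  have hwunit : ∀ j, conj (w j 0) * (w j 0) + conj (w j 1) * (w j 1) = 1 := by
    intro j
    have hu : star (U j (Fin.last n)) * U j (Fin.last n) = 1 :=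
      Matrix.mem_unitaryGroup_iff'.mp (hU j (Fin.last n))
    have := congrFun (congrFun hu 0) 0
    simpa [Matrix.mul_apply, Fin.sum_univ_two, Matrix.one_apply, Matrix.star_apply,
      Complex.star_def, w] using this
  have hwdot : ∀ j j', star (w j) ⬝ᵥ w j' =
      conj (w j 0) * w j' 0 + conj (w j 1) * w j' 1 := fun j j' => dot_two _ _
  have hw1 : ∀ j, star (w j) ⬝ᵥ w j = 1 := by
    intro j; rw [hwdot]; exact hwunit j
  obtain ⟨S, hScard, hSind⟩ := comboAux
    (fun j => Lf (w j 0) (w j 1)) (fun j => Pf (w j 0) (w j 1))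
    (by
      intro j heq
      have h0 := (core_iff (hwunit j) (hwunit j)).mpr heq
      rw [hwunit j] at h0
      exact one_ne_zero h0)
    (by
      intro j j'
      rw [← core_iff (hwunit j') (hwunit j), ← core_iff (hwunit j) (hwunit j')]
      exact dot_two_swap_zero _ _)
    (fun j j' hL => P_respects_L (hwunit j) (hwunit j') hL)
    (fun j j' hP => L_respects_P (hwunit j) (hwunit j') hP)
  have h2n : 2 ^ n ≤ S.card := by
    have : 2 ^ (n + 1) = 2 * 2 ^ n := by ring
    omega
  obtain ⟨T, hTS, hTcard⟩ := Finset.exists_subset_card_eq h2n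
  let e := T.orderIsoOfFin hTcard
  refine ⟨fun j k => U (e j : Fin (2 ^ (n + 1))) k.castSucc, fun j k => hU _ _, ?_⟩
  intro j j' hne
  have hgj : (e j : Fin (2 ^ (n + 1))) ∈ S := hTS (e j).2
  have hgj' : (e j' : Fin (2 ^ (n + 1))) ∈ S := hTS (e j').2
  have hgne : (e j : Fin (2 ^ (n + 1))) ≠ (e j' : Fin (2 ^ (n + 1))) := by
    intro hh
    exact hne (e.injective (Subtype.ext hh))
  have hprod := hfact (e j) (e j')
  rw [if_neg hgne] at hprod
  rcases mul_eq_zero.mp hprod with h0 | h0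
  · exact h0
  · exfalso
    rw [hwdot] at h0
    exact hSind _ hgj _ hgj'
      ((core_iff (hwunit (e j)) (hwunit (e j'))).mp h0)
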